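/- Let s and r be independent random variables, exponentially distributed with means Ω_S > 0 and Ω_R > 0, respectively. Then E[min(log₂(1+s), log₂(1+r))] = (1/ln 2)·exp((Ω_R+Ω_S)/(Ω_S·Ω_R))·E₁((Ω_R+Ω_S)/(Ω_S·Ω_R)). In particular, the throughput of conventional relaying without buffer over Rayleigh fading links equals τ_conv,1 = (1/2)·(1/ln 2)·exp((Ω_R+Ω_S)/(Ω_S·Ω_R))·E₁((Ω_R+Ω_S)/(Ω_S·Ω_R)). -/

import Mathlib

open MeasureTheory ProbabilityTheory

/-- The exponential integral function `E₁(x) = ∫_x^∞ e^{-t}/t dt`. -/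
noncomputable def expIntE1 (x : ℝ) : ℝ := ∫ t in Set.Ioi x, Real.exp (-t) / t

/-- The law of an exponentially distributed random variable with mean `Ω`:
the measure on `ℝ` with density `(1/Ω) e^{-x/Ω}` on `[0,∞)` with respect to
Lebesgue measure. -/
noncomputable def expLaw (Ω : ℝ) : Measure ℝ :=
  (volume.restrict (Set.Ici (0 : ℝ))).withDensity
    (fun x => ENNReal.ofReal ((1 / Ω) * Real.exp (-x / Ω)))


lemma aux_integrable {b : ℝ} (hb : 0 < b) (t : ℝ) :
    IntegrableOn (fun x => b * Real.exp (-(x * b))) (Set.Ioi t) := by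
  have h := (exp_neg_integrableOn_Ioi t hb).const_mul b
  simpa [neg_mul, mul_comm, IntegrableOn] using h

lemma aux_integral {b : ℝ} (hb : 0 < b) (t : ℝ) :
    ∫ x in Set.Ioi t, b * Real.exp (-(x * b)) = Real.exp (-(t * b)) := by
  have hderiv : ∀ x ∈ Set.Ici t, HasDerivAt (fun y => -Real.exp (-(y * b)))
      (b * Real.exp (-(x * b))) x := by
    intro x _
    have h1 : HasDerivAt (fun y : ℝ => -(y * b)) (-b) x := by
      exact (hasDerivAt_mul_const b).neg (x := x)
    have h2 := (h1.exp).neg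
    exact h2.congr_deriv (by ring)
  have htend : Filter.Tendsto (fun y => -Real.exp (-(y * b))) Filter.atTop (nhds 0) := by
    rw [show (0:ℝ) = -0 by ring]
    apply Filter.Tendsto.neg
    have h1 : Filter.Tendsto (fun y : ℝ => y * b) Filter.atTop Filter.atTop :=
      Filter.Tendsto.atTop_mul_const hb Filter.tendsto_id
    have h2 : Filter.Tendsto (fun y : ℝ => -(y * b)) Filter.atTop Filter.atBot := by
      exact Filter.tendsto_neg_atTop_atBot.comp h1
    exact Real.tendsto_exp_atBot.comp h2
  have := MeasureTheory.integral_Ioi_of_hasDerivAt_of_tendsto'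
    hderiv (aux_integrable hb t) htend
  simpa using this

lemma expLaw_lint {Ω : ℝ} (hΩ : 0 < Ω) (a : ℝ) :
    ∫⁻ x in Set.Ioi a, ENNReal.ofReal ((1/Ω) * Real.exp (-x/Ω))
      = ENNReal.ofReal (Real.exp (-(a/Ω))) := by
  have hb : 0 < 1/Ω := by positivity
  have heq : ∀ x : ℝ, (1/Ω) * Real.exp (-x/Ω) = (1/Ω) * Real.exp (-(x * (1/Ω))) := by
    intro x; congr 1; ring_nf
  simp_rw [heq]
  rw [← MeasureTheory.ofReal_integral_eq_lintegral_ofReal (aux_integrable hb a)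
    (Filter.Eventually.of_forall fun x => by positivity)]
  rw [aux_integral hb a]
  congr 1
  ring_nf

lemma expLaw_Ioi {Ω : ℝ} (hΩ : 0 < Ω) (t : ℝ) :
    expLaw Ω (Set.Ioi t) = ENNReal.ofReal (Real.exp (-(max t 0 / Ω))) := by
  rw [expLaw, withDensity_apply _ measurableSet_Ioi,
    Measure.restrict_restrict measurableSet_Ioi]
  have hsets : (Set.Ioi t ∩ Set.Ici 0 : Set ℝ) =ᵐ[volume] Set.Ioi (max t 0) := by
    rcases le_total t 0 with h | h
    · rw [max_eq_right h]
      rw [MeasureTheory.ae_eq_set]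
      constructor
      · apply measure_mono_null (t := {(0:ℝ)}) ?_ (by simp)
        intro x hx
        simp only [Set.mem_inter_iff, Set.mem_Ioi, Set.mem_Ici, Set.mem_diff,
          Set.mem_singleton_iff, not_lt] at *
        exact le_antisymm hx.2 hx.1.2
      · apply measure_mono_null (t := (∅ : Set ℝ)) ?_ (by simp)
        intro x hx
        simp only [Set.mem_diff, Set.mem_Ioi, Set.mem_inter_iff, Set.mem_Ici] at hx
        exact absurd ⟨lt_of_le_of_lt h hx.1, le_of_lt hx.1⟩ hx.2
    · rw [max_eq_left h, Set.inter_eq_left.mpr]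
      exact Filter.EventuallyEq.rfl
      intro x hx
      exact le_trans h (le_of_lt hx)
  rw [MeasureTheory.setLIntegral_congr hsets, expLaw_lint hΩ]

theorem expLaw_prob {Ω : ℝ} (hΩ : 0 < Ω) : IsProbabilityMeasure (expLaw Ω) := by
  constructor
  rw [expLaw, withDensity_apply _ MeasurableSet.univ, Measure.restrict_restrict
    MeasurableSet.univ, Set.univ_inter,
    MeasureTheory.setLIntegral_congr (MeasureTheory.Ioi_ae_eq_Ici (a := (0:ℝ))).symm,
    expLaw_lint hΩ]
  simp

lemma expLaw_Iio_zero {Ω : ℝ} : expLaw Ω (Set.Iio 0) = 0 := by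
  rw [expLaw, withDensity_apply _ measurableSet_Iio,
    Measure.restrict_restrict measurableSet_Iio]
  have : (Set.Iio (0:ℝ) ∩ Set.Ici 0) = ∅ := by
    rw [Set.Iio_inter_Ici, Set.Ico_self]
  rw [this]; simp

lemma measurable_g : Measurable (fun x : ℝ => Real.logb 2 (1+x)) := by
  simp only [Real.logb]
  exact (Real.measurable_log.comp (measurable_id.const_add 1)).div_const _

lemma integral_logb_expLaw {Ω : ℝ} (hΩ : 0 < Ω) :
    ∫ x, Real.logb 2 (1+x) ∂(expLaw Ω)
      = (1/Real.log 2) * Real.exp (1/Ω) * expIntE1 (1/Ω) := by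
  set l : ℝ := 1/Ω with hl_def
  have hl : 0 < l := by positivity
  have hlog2 : 0 < Real.log 2 := Real.log_pos one_lt_two
  set μ := expLaw Ω with hμ
  -- nonnegativity a.e.
  have hnn : 0 ≤ᵐ[μ] fun x : ℝ => Real.logb 2 (1+x) := by
    rw [Filter.EventuallyLE, MeasureTheory.ae_iff]
    apply measure_mono_null (t := Set.Iio (0:ℝ)) _ expLaw_Iio_zero
    intro x hx
    simp only [Set.mem_setOf_eq, Pi.zero_apply, not_le] at hx
    simp only [Set.mem_Iio]
    by_contra h
    push_neg at h
    exact absurd (Real.logb_nonneg one_lt_two (by linarith)) (not_le.mpr hx)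
  rw [MeasureTheory.integral_eq_lintegral_of_nonneg_ae hnn
    measurable_g.aestronglyMeasurable]
  rw [MeasureTheory.lintegral_eq_lintegral_meas_lt μ hnn measurable_g.aemeasurable]
  -- identify the survival function
  have hstep : ∀ t ∈ Set.Ioi (0:ℝ), μ {a : ℝ | t < Real.logb 2 (1+a)}
      = ENNReal.ofReal (Real.exp (-((Real.exp (t * Real.log 2) - 1) * l))) := by
    intro t ht
    simp only [Set.mem_Ioi] at ht
    set E := Real.exp (t * Real.log 2) with hE_def
    have hE : 1 < E := by
      rw [hE_def, show (1:ℝ) = Real.exp 0 by simp]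
      exact Real.exp_lt_exp.mpr (by positivity)
    have hiff : ∀ x : ℝ, 0 < 1 + x → (t < Real.logb 2 (1+x) ↔ E - 1 < x) := by
      intro x hx
      rw [Real.logb, lt_div_iff₀ hlog2, Real.lt_log_iff_exp_lt hx, hE_def]
      constructor <;> intro h <;> linarith
    have hae : {a : ℝ | t < Real.logb 2 (1+a)} =ᵐ[μ] Set.Ioi (E - 1) := by
      rw [MeasureTheory.ae_eq_set]
      constructor
      · apply measure_mono_null (t := Set.Iio (0:ℝ)) _ expLaw_Iio_zero
        intro x hx
        simp only [Set.mem_diff, Set.mem_setOf_eq, Set.mem_Ioi, not_lt] at hx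
        simp only [Set.mem_Iio]
        by_contra h
        push_neg at h
        exact absurd ((hiff x (by linarith)).mp hx.1) (not_lt.mpr hx.2)
      · apply measure_mono_null (t := (∅ : Set ℝ)) _ (by simp)
        intro x hx
        simp only [Set.mem_diff, Set.mem_Ioi, Set.mem_setOf_eq, not_lt] at hx
        have hx0 : 0 < x := by linarith
        exact absurd ((hiff x (by linarith)).mpr hx.1) (not_lt.mpr hx.2)
    rw [measure_congr hae, hμ, expLaw_Ioi hΩ, max_eq_left (by linarith)]
    congr 2
    rw [hl_def]; ring
  rw [MeasureTheory.setLIntegral_congr_fun measurableSet_Ioi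
    hstep]
  -- integrability of the survival function
  have hcont : Continuous fun t : ℝ => Real.exp (-((Real.exp (t * Real.log 2) - 1) * l)) := by
    continuity
  have hbound : ∀ t : ℝ, Real.exp (-((Real.exp (t * Real.log 2) - 1) * l))
      ≤ Real.exp (-(l * Real.log 2) * t) := by
    intro t
    apply Real.exp_le_exp.mpr
    have := Real.add_one_le_exp (t * Real.log 2)
    nlinarith [hl, hlog2]
  have hint : IntegrableOn (fun t : ℝ => Real.exp (-((Real.exp (t * Real.log 2) - 1) * l)))
      (Set.Ioi (0:ℝ)) := by
    apply Integrable.mono (exp_neg_integrableOn_Ioi 0 (by positivity : 0 < l * Real.log 2))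
      hcont.aestronglyMeasurable
    apply Filter.Eventually.of_forall
    intro t
    rw [Real.norm_eq_abs, Real.norm_eq_abs, abs_of_pos (Real.exp_pos _),
      abs_of_pos (Real.exp_pos _)]
    exact hbound t
  rw [← MeasureTheory.ofReal_integral_eq_lintegral_ofReal hint
    (Filter.Eventually.of_forall fun t => (Real.exp_pos _).le)]
  -- compute the real integral by substitution
  have hsplit : ∀ t : ℝ, Real.exp (-((Real.exp (t * Real.log 2) - 1) * l))
      = Real.exp l * Real.exp (-(l * Real.exp (t * Real.log 2))) := by
    intro t
    rw [← Real.exp_add]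
    congr 1
    ring
  simp_rw [hsplit]
  rw [MeasureTheory.integral_const_mul]
  -- substitution u = l * exp (t * log 2)
  have hderiv : ∀ x ∈ Set.Ioi (0:ℝ),
      HasDerivWithinAt (fun t : ℝ => l * Real.exp (t * Real.log 2))
        (l * (Real.exp (x * Real.log 2) * Real.log 2)) (Set.Ioi 0) x := by
    intro x _
    exact (((hasDerivAt_mul_const (Real.log 2)).exp).const_mul l).hasDerivWithinAt
  have hinj : Set.InjOn (fun t : ℝ => l * Real.exp (t * Real.log 2)) (Set.Ioi 0) := by
    intro a _ b _ h
    simp only at h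
    have h2 := Real.exp_injective (mul_left_cancel₀ (ne_of_gt hl) h)
    exact mul_right_cancel₀ (ne_of_gt hlog2) h2
  have himg : (fun t : ℝ => l * Real.exp (t * Real.log 2)) '' Set.Ioi 0 = Set.Ioi l := by
    ext u
    simp only [Set.mem_image, Set.mem_Ioi]
    constructor
    · rintro ⟨t, ht, rfl⟩
      have : 1 < Real.exp (t * Real.log 2) := by
        rw [show (1:ℝ) = Real.exp 0 by simp]
        exact Real.exp_lt_exp.mpr (by positivity)
      nlinarith
    · intro hu
      refine ⟨Real.log (u/l) / Real.log 2, ?_, ?_⟩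
      · have h1 : 1 < u / l := (one_lt_div hl).mpr hu
        exact div_pos (Real.log_pos h1) hlog2
      · rw [div_mul_cancel₀ _ (ne_of_gt hlog2),
          Real.exp_log (div_pos (lt_trans hl hu) hl)]
        field_simp
  have hsub := MeasureTheory.integral_image_eq_integral_abs_deriv_smul measurableSet_Ioi
    hderiv hinj (fun u => Real.exp (-u) / (u * Real.log 2))
  rw [himg] at hsub
  have hrhs : ∫ x in Set.Ioi (0:ℝ),
      |l * (Real.exp (x * Real.log 2) * Real.log 2)| •
        (Real.exp (-(l * Real.exp (x * Real.log 2))) / (l * Real.exp (x * Real.log 2) * Real.log 2))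
      = ∫ x in Set.Ioi (0:ℝ), Real.exp (-(l * Real.exp (x * Real.log 2))) := by
    congr 1
    funext x
    rw [smul_eq_mul, abs_of_pos (by positivity)]
    have hE : 0 < Real.exp (x * Real.log 2) := Real.exp_pos _
    field_simp
  rw [hrhs] at hsub
  rw [← hsub]
  have hlhs : ∫ u in Set.Ioi l, Real.exp (-u) / (u * Real.log 2)
      = expIntE1 l / Real.log 2 := by
    rw [expIntE1]
    rw [← MeasureTheory.integral_div]
    congr 1
    funext u
    rw [div_div]
  rw [hlhs]
  have hE1 : 0 ≤ expIntE1 l := by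
    apply MeasureTheory.setIntegral_nonneg measurableSet_Ioi
    intro u hu
    simp only [Set.mem_Ioi] at hu
    have : 0 < u := lt_trans hl hu
    positivity
  rw [ENNReal.toReal_ofReal (by positivity)]
  ring

open ProbabilityTheory in
lemma map_min_eq {α : Type*} [MeasurableSpace α] (P : Measure α) [IsProbabilityMeasure P]
    (s r : α → ℝ) (hs : Measurable s) (hr : Measurable r)
    (ΩS ΩR : ℝ) (hΩS : 0 < ΩS) (hΩR : 0 < ΩR)
    (hlaws : P.map s = expLaw ΩS) (hlawr : P.map r = expLaw ΩR)
    (hindep : IndepFun s r P) :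
    P.map (fun ω => min (s ω) (r ω)) = expLaw (ΩS * ΩR / (ΩS + ΩR)) := by
  have hm : Measurable fun ω => min (s ω) (r ω) := hs.min hr
  have hΩ' : 0 < ΩS * ΩR / (ΩS + ΩR) := by positivity
  haveI := expLaw_prob hΩ'
  haveI : IsProbabilityMeasure (P.map fun ω => min (s ω) (r ω)) :=
    Measure.isProbabilityMeasure_map hm.aemeasurable
  have key : ∀ t : ℝ, P.map (fun ω => min (s ω) (r ω)) (Set.Ioi t)
      = expLaw (ΩS * ΩR / (ΩS + ΩR)) (Set.Ioi t) := by
    intro t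
    rw [Measure.map_apply hm measurableSet_Ioi]
    have hpre : (fun ω => min (s ω) (r ω)) ⁻¹' Set.Ioi t
        = s ⁻¹' Set.Ioi t ∩ r ⁻¹' Set.Ioi t := by
      ext ω; simp [lt_min_iff]
    rw [hpre, (indepFun_iff_measure_inter_preimage_eq_mul.mp hindep) _ _
      measurableSet_Ioi measurableSet_Ioi,
      ← Measure.map_apply hs measurableSet_Ioi, ← Measure.map_apply hr measurableSet_Ioi,
      hlaws, hlawr, expLaw_Ioi hΩS t, expLaw_Ioi hΩR t, expLaw_Ioi hΩ' t,
      ← ENNReal.ofReal_mul (Real.exp_pos _).le, ← Real.exp_add]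
    congr 2
    field_simp
    ring
  apply Measure.ext_of_Iic
  intro t
  have h1 : ∀ (μ : Measure ℝ) [IsProbabilityMeasure μ],
      μ (Set.Iic t) = 1 - μ (Set.Ioi t) := by
    intro μ _
    rw [← Set.compl_Ioi, measure_compl measurableSet_Ioi (measure_ne_top μ _),
      measure_univ]
  rw [h1, h1, key t]


/-- For independent exponential SNRs `s`, `r` with means `Ω_S`, `Ω_R`,
`E[min(log₂(1+s), log₂(1+r))] = (1/ln 2) e^{(Ω_R+Ω_S)/(Ω_SΩ_R)}
E₁((Ω_R+Ω_S)/(Ω_SΩ_R))`; in particular, the throughput of conventional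
relaying without buffer over Rayleigh fading links equals
`τ_conv,1 = (1/2)(1/ln 2) e^{(Ω_R+Ω_S)/(Ω_SΩ_R)} E₁((Ω_R+Ω_S)/(Ω_SΩ_R))`. -/
theorem conv_relaying_no_buffer_throughput_rayleigh
    {Ω : Type*} [MeasurableSpace Ω] (P : Measure Ω) [IsProbabilityMeasure P]
    (s r : Ω → ℝ) (hs : Measurable s) (hr : Measurable r)
    (ΩS ΩR : ℝ) (hΩS : 0 < ΩS) (hΩR : 0 < ΩR)
    (hlaws : P.map s = expLaw ΩS) (hlawr : P.map r = expLaw ΩR)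
    (hindep : IndepFun s r P) :
    (∫ ω, min (Real.logb 2 (1 + s ω)) (Real.logb 2 (1 + r ω)) ∂P
      = (1 / Real.log 2) * Real.exp ((ΩR + ΩS) / (ΩS * ΩR))
          * expIntE1 ((ΩR + ΩS) / (ΩS * ΩR))) ∧
    ((1 / 2) * ∫ ω, min (Real.logb 2 (1 + s ω)) (Real.logb 2 (1 + r ω)) ∂P
      = (1 / (2 * Real.log 2)) * Real.exp ((ΩR + ΩS) / (ΩS * ΩR))
          * expIntE1 ((ΩR + ΩS) / (ΩS * ΩR))) := by
  
  have hm : Measurable fun ω => min (s ω) (r ω) := hs.min hr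
  have hΩ' : 0 < ΩS * ΩR / (ΩS + ΩR) := by positivity
  -- a.s. nonnegativity of s and r
  have hs0 : ∀ᵐ ω ∂P, 0 ≤ s ω := by
    rw [MeasureTheory.ae_iff]
    have : {ω | ¬ 0 ≤ s ω} = s ⁻¹' Set.Iio 0 := by ext ω; simp
    rw [this, ← Measure.map_apply hs measurableSet_Iio, hlaws, expLaw_Iio_zero]
  have hr0 : ∀ᵐ ω ∂P, 0 ≤ r ω := by
    rw [MeasureTheory.ae_iff]
    have : {ω | ¬ 0 ≤ r ω} = r ⁻¹' Set.Iio 0 := by ext ω; simp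
    rw [this, ← Measure.map_apply hr measurableSet_Iio, hlawr, expLaw_Iio_zero]
  -- reduce min of logs to log of min
  have hcongr : ∫ ω, min (Real.logb 2 (1 + s ω)) (Real.logb 2 (1 + r ω)) ∂P
      = ∫ ω, Real.logb 2 (1 + min (s ω) (r ω)) ∂P := by
    apply MeasureTheory.integral_congr_ae
    filter_upwards [hs0, hr0] with ω h1 h2
    rcases le_total (s ω) (r ω) with h | h
    · rw [min_eq_left h, min_eq_left]
      exact Real.logb_le_logb_of_le one_lt_two (by linarith) (by linarith)
    · rw [min_eq_right h, min_eq_right]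
      exact Real.logb_le_logb_of_le one_lt_two (by linarith) (by linarith)
  have hmap : ∫ ω, Real.logb 2 (1 + min (s ω) (r ω)) ∂P
      = ∫ x, Real.logb 2 (1 + x) ∂(P.map fun ω => min (s ω) (r ω)) := by
    rw [MeasureTheory.integral_map hm.aemeasurable measurable_g.aestronglyMeasurable]
  have hlam : 1 / (ΩS * ΩR / (ΩS + ΩR)) = (ΩR + ΩS) / (ΩS * ΩR) := by
    rw [one_div_div, add_comm]
  have key : ∫ ω, min (Real.logb 2 (1 + s ω)) (Real.logb 2 (1 + r ω)) ∂P
      = (1 / Real.log 2) * Real.exp ((ΩR + ΩS) / (ΩS * ΩR))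
          * expIntE1 ((ΩR + ΩS) / (ΩS * ΩR)) := by
    rw [hcongr, hmap, map_min_eq P s r hs hr ΩS ΩR hΩS hΩR hlaws hlawr hindep,
      integral_logb_expLaw hΩ', hlam]
  refine ⟨key, ?_⟩
  rw [key]
  ring
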